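/- First-order stationarity implies exact reweighted coverage (core identity in the proof of Proposition 1). Let ℋ be a linear subspace of L²(P₁,X) with 1 ∈ ℋ, let r ∈ L²(P₁,X) satisfy E₁[r(X)] = 1, and let r_ℋ be the orthogonal projection of r onto ℋ in L²(P₁,X). Let h* ∈ ℋ, β* ∈ ℝ, λ ≥ 0, α ∈ (0,1), and let F : 𝒳 → [0,1] be measurable. Suppose the stationarity conditions hold: (i) E₁[h*(X)·(β*h*(X) − r(X))] = 0, and (ii) for every h ∈ ℋ: E₁[h(X)·(F(X) − (1−α))] + 2λβ*·E₁[h(X)·(β*h*(X) − r(X))] = 0. Then E₁[r_ℋ(X)·F(X)] = (1−α) + 2λβ*·E₁[(r_ℋ(X) − β*h*(X))²]. In particular, if β* ≥ 0 then E₁[r_ℋ(X)·F(X)] ≥ 1 − α. -/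

import Mathlib

open MeasureTheory

lemma int_mul_of_L2 {𝒳 : Type*} [MeasurableSpace 𝒳] {μX : Measure 𝒳}
    {f g : 𝒳 → ℝ} (hf : MemLp f 2 μX) (hg : MemLp g 2 μX) :
    Integrable (fun x => f x * g x) μX := by
  have h1 := (hf.add hg).integrable_sq
  have h2 := hf.integrable_sq
  have h3 := hg.integrable_sq
  have h4 := (((h1.sub h2).sub h3).const_mul (2⁻¹ : ℝ))
  exact h4.congr (Filter.Eventually.of_forall fun x => by simp [Pi.add_apply]; ring)

/-- First-order stationarity implies exact reweighted coverage (core identity in the proof of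
Proposition 1).  `H` is a linear subspace of `L²(P₁,X)` (encoded as a set of square-integrable
functions closed under linear combinations) containing the constant function `1`; `rH` is the
orthogonal projection of `r` onto `H` (encoded by membership and the orthogonality relations);
`F x` plays the role of the conditional coverage probability `P(S ≤ h*(X) | X = x)`. -/
theorem stationarity_implies_reweighted_coverage
    {𝒳 : Type*} [MeasurableSpace 𝒳] (μX : Measure 𝒳) [IsProbabilityMeasure μX]
    (H : Set (𝒳 → ℝ))
    (hHlin : ∀ f ∈ H, ∀ g ∈ H, ∀ c₁ c₂ : ℝ, (fun x => c₁ * f x + c₂ * g x) ∈ H)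
    (hHL2 : ∀ h ∈ H, MemLp h 2 μX)
    (hone : (fun _ => (1 : ℝ)) ∈ H)
    (r rH hstar : 𝒳 → ℝ) (βstar lam α : ℝ) (hlam : 0 ≤ lam) (hα : α ∈ Set.Ioo (0 : ℝ) 1)
    (hr2 : MemLp r 2 μX)
    (hrmean : ∫ x, r x ∂μX = 1)
    (hrHmem : rH ∈ H)
    (hproj : ∀ h ∈ H, ∫ x, (r x - rH x) * h x ∂μX = 0)
    (hhmem : hstar ∈ H)
    (F : 𝒳 → ℝ) (hFmeas : Measurable F) (hF : ∀ x, F x ∈ Set.Icc (0 : ℝ) 1)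
    (hstat1 : ∫ x, hstar x * (βstar * hstar x - r x) ∂μX = 0)
    (hstat2 : ∀ h ∈ H, (∫ x, h x * (F x - (1 - α)) ∂μX)
      + 2 * lam * βstar * ∫ x, h x * (βstar * hstar x - r x) ∂μX = 0) :
    (∫ x, rH x * F x ∂μX
        = (1 - α) + 2 * lam * βstar * ∫ x, (rH x - βstar * hstar x) ^ 2 ∂μX)
    ∧ (0 ≤ βstar → (1 - α) ≤ ∫ x, rH x * F x ∂μX) := by
  have hrH2 := hHL2 rH hrHmem
  have hh2 := hHL2 hstar hhmem
  have hF2 : MemLp F 2 μX := by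
    have hb : MemLp F ⊤ μX := memLp_top_of_bound hFmeas.aestronglyMeasurable 1
      (Filter.Eventually.of_forall fun x => by
        rcases hF x with ⟨h0, h1⟩
        rw [Real.norm_eq_abs, abs_le]; constructor <;> linarith)
    exact hb.mono_exponent le_top
  have hrint : Integrable r μX := hr2.integrable (by norm_num)
  have hrHint : Integrable rH μX := hrH2.integrable (by norm_num)
  have iRr : Integrable (fun x => rH x * r x) μX := int_mul_of_L2 hrH2 hr2
  have irR : Integrable (fun x => r x * rH x) μX := int_mul_of_L2 hr2 hrH2
  have iRR : Integrable (fun x => rH x * rH x) μX := int_mul_of_L2 hrH2 hrH2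
  have iRh : Integrable (fun x => rH x * hstar x) μX := int_mul_of_L2 hrH2 hh2
  have irh : Integrable (fun x => r x * hstar x) μX := int_mul_of_L2 hr2 hh2
  have ihh : Integrable (fun x => hstar x * hstar x) μX := int_mul_of_L2 hh2 hh2
  have iRF : Integrable (fun x => rH x * F x) μX := int_mul_of_L2 hrH2 hF2
  -- mean of rH is 1
  have hrHmean : ∫ x, rH x ∂μX = 1 := by
    have h := hproj _ hone
    simp only [mul_one] at h
    rw [integral_sub hrint hrHint] at h
    linarith
  -- commuting identities
  have commRr : ∫ x, rH x * r x ∂μX = ∫ x, r x * rH x ∂μX := by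
    congr 1; ext x; ring
  have commhr : ∫ x, hstar x * r x ∂μX = ∫ x, r x * hstar x ∂μX := by
    congr 1; ext x; ring
  -- projection identities
  have eqA : ∫ x, rH x * r x ∂μX = ∫ x, rH x * rH x ∂μX := by
    have h := hproj _ hrHmem
    simp only [sub_mul] at h
    rw [integral_sub irR iRR] at h
    rw [commRr]; linarith
  have eq3 : ∫ x, r x * hstar x ∂μX = ∫ x, rH x * hstar x ∂μX := by
    have h := hproj _ hhmem
    simp only [sub_mul] at h
    rw [integral_sub irh iRh] at h
    linarith
  -- stationarity (i)
  have eqE : βstar * ∫ x, hstar x * hstar x ∂μX = ∫ x, rH x * hstar x ∂μX := by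
    have h : ∫ x, (βstar * (hstar x * hstar x) - hstar x * r x) ∂μX = 0 := by
      rw [← hstat1]; congr 1; ext x; ring
    rw [integral_sub (ihh.const_mul βstar) (int_mul_of_L2 hh2 hr2),
      integral_const_mul _ _] at h
    rw [← eq3, ← commhr]; linarith
  -- expand the stationarity equation (ii) applied to rH
  have h5 := hstat2 rH hrHmem
  have t1 : ∫ x, rH x * (F x - (1 - α)) ∂μX
      = ∫ x, rH x * F x ∂μX - (1 - α) * ∫ x, rH x ∂μX := by
    rw [← integral_const_mul _ _, ← integral_sub iRF (hrHint.const_mul _)]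
    congr 1; ext x; ring
  have t2 : ∫ x, rH x * (βstar * hstar x - r x) ∂μX
      = βstar * ∫ x, rH x * hstar x ∂μX - ∫ x, rH x * r x ∂μX := by
    rw [← integral_const_mul _ _, ← integral_sub (iRh.const_mul _) iRr]
    congr 1; ext x; ring
  rw [t1, t2, hrHmean, mul_one] at h5
  -- expand the square
  have tsq : ∫ x, (rH x - βstar * hstar x) ^ 2 ∂μX
      = ∫ x, rH x * rH x ∂μX - 2 * βstar * ∫ x, rH x * hstar x ∂μX
        + βstar ^ 2 * ∫ x, hstar x * hstar x ∂μX := by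
    have e1 : ∫ x, (rH x - βstar * hstar x) ^ 2 ∂μX
        = ∫ x, (rH x * rH x - 2 * βstar * (rH x * hstar x)
            + βstar ^ 2 * (hstar x * hstar x)) ∂μX := by
      congr 1; ext x; ring
    have isub : Integrable (fun x => rH x * rH x - 2 * βstar * (rH x * hstar x)) μX :=
      iRR.sub (iRh.const_mul _)
    rw [e1, integral_add isub (ihh.const_mul _),
      integral_sub iRR (iRh.const_mul _), integral_const_mul, integral_const_mul]
  have hmain : ∫ x, rH x * F x ∂μX
      = (1 - α) + 2 * lam * βstar * ∫ x, (rH x - βstar * hstar x) ^ 2 ∂μX := by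
    rw [tsq]
    linear_combination h5 + 2 * lam * βstar * eqA - 2 * lam * βstar ^ 2 * eqE
  refine ⟨hmain, fun hβ => ?_⟩
  have hsq : 0 ≤ ∫ x, (rH x - βstar * hstar x) ^ 2 ∂μX :=
    integral_nonneg fun x => sq_nonneg _
  nlinarith [mul_nonneg (mul_nonneg (mul_nonneg (by norm_num : (0:ℝ) ≤ 2) hlam) hβ) hsq]
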